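/- arXiv:2003.02391 — 6 statements merged into one kernel-verified Lean document; each statement's English description precedes it below -/
import Mathlib

section
/- If there exists an order-preserving bijective code between two finite totally ordered alphabets Σ₁ and Σ₂ (i.e., a map C: Σ₁ → Σ₂* whose induced concatenation-homomorphism φ: Σ₁* → Σ₂* is a bijection that is strictly monotone with respect to lexicographic order), then |Σ₁| = |Σ₂|. -/
/-- The concatenation homomorphism `φ : Σ₁* → Σ₂*` induced by a code `C : Σ₁ → Σ₂*`. -/
def codePhi {α β : Type*} (C : α → List β) (w : List α) : List β :=
  (w.map C).flatten

/-- If there is an order-preserving bijective code between two finite totally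
ordered alphabets, then they have the same cardinality. -/
theorem card_eq_of_orderPreserving_bijective_code
    {α β : Type*} [Fintype α] [LinearOrder α] [Fintype β] [LinearOrder β]
    (C : α → List β)
    (hbij : Function.Bijective (codePhi C))
    (hmono : ∀ u v : List α, List.Lex (· < ·) u v →
      List.Lex (· < ·) (codePhi C u) (codePhi C v)) :
    Fintype.card α = Fintype.card β := by
  classical
  have hphi_app : ∀ u v : List α, codePhi C (u ++ v) = codePhi C u ++ codePhi C v := by
    intro u v; simp [codePhi]
  have hsingle : ∀ a : α, codePhi C [a] = C a := by
    intro a; simp [codePhi]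
  have hCne : ∀ a : α, C a ≠ [] := by
    intro a h
    have h2 : codePhi C [a] = codePhi C [] := by simp [codePhi, h]
    have := hbij.injective h2
    simp at this
  obtain ⟨g, hgl, hgr⟩ := Function.bijective_iff_has_inverse.mp hbij
  have hg_app : ∀ x y : List β, g (x ++ y) = g x ++ g y := by
    intro x y
    apply hbij.injective
    rw [hphi_app, hgr, hgr, hgr]
  have hlen : ∀ w : List α, w.length ≤ (codePhi C w).length := by
    intro w
    induction w with
    | nil => simp [codePhi]
    | cons a w ih =>
      have h : codePhi C (a :: w) = C a ++ codePhi C w := rfl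
      rw [h]
      have h1 : 1 ≤ (C a).length := List.length_pos_iff.mpr (hCne a)
      simp only [List.length_append, List.length_cons]
      omega
  have hD : ∀ b : β, ∃ a : α, g [b] = [a] ∧ C a = [b] := by
    intro b
    have h1 : codePhi C (g [b]) = [b] := hgr [b]
    have h2 : (g [b]).length ≤ 1 := by
      have := hlen (g [b]); rw [h1] at this; simpa using this
    have h3 : g [b] ≠ [] := by
      intro h
      rw [h] at h1
      simp [codePhi] at h1
    have h4 : (g [b]).length = 1 := by
      have := List.length_pos_iff.mpr h3; omega
    obtain ⟨a, ha⟩ := List.length_eq_one_iff.mp h4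
    refine ⟨a, ha, ?_⟩
    rw [ha] at h1
    rw [hsingle] at h1
    exact h1
  choose e he1 he2 using hD
  have hglen : ∀ x : List β, x.length ≤ (g x).length := by
    intro x
    induction x with
    | nil => simp
    | cons b x ih =>
      have h : (b :: x) = [b] ++ x := rfl
      rw [h, hg_app, he1]
      simp only [List.length_append, List.length_cons, List.length_nil]
      omega
  have hinj : Function.Injective e := by
    intro b b' h
    have h1 : C (e b) = [b] := he2 b
    have h2 : C (e b') = [b'] := he2 b'
    rw [h] at h1
    rw [h1] at h2
    injection h2
  have hsurj : Function.Surjective e := by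
    intro a
    have hga : g (C a) = [a] := by
      have := hgl [a]
      rwa [hsingle] at this
    have hlen1 : (C a).length ≤ 1 := by
      have := hglen (C a); rw [hga] at this; simpa using this
    have hlen2 : (C a).length = 1 := by
      have := List.length_pos_iff.mpr (hCne a); omega
    obtain ⟨b, hb⟩ := List.length_eq_one_iff.mp hlen2
    refine ⟨b, ?_⟩
    have : g [b] = [a] := by rw [← hb]; exact hga
    have h2 := he1 b
    rw [this] at h2
    injection h2 with h3
    exact h3.symm
  have := Fintype.card_le_of_injective e hinj
  have := Fintype.card_le_of_surjective e hsurj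
  omega
end

section
/- Let q₀ < q₁ < ... < q_{n-1} < q_n = 1 be rationals in [0,1) with q₀ > 0, and set l_i = q_{i+1} − q_i. For any string s_{i_0}...s_{i_{m-1}} over the alphabet {0,...,n−1} and any p with 1 ≤ p ≤ m−1, one has ∑_{k=p}^{m-1} q_{i_k} ∏_{t=0}^{k-1} l_{i_t} < ∏_{t=0}^{p-1} l_{i_t}. -/
lemma telescope_Ico (P : ℕ → ℚ) {p m : ℕ} (h : p ≤ m) :
    ∑ k ∈ Finset.Ico p m, (P k - P (k + 1)) = P p - P m := by
  induction m, h using Nat.le_induction with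
  | base => simp
  | succ m hm ih =>
    rw [Finset.sum_Ico_succ_top hm, ih]; ring

/-- Lemma 1: for a string `s` of length `m` over the alphabet `Fin n`, with
rationals `0 < q 0 < q 1 < ⋯ < q n = 1` and interval lengths
`l i = q (i+1) - q i`, for any `1 ≤ p ≤ m - 1`,
`∑_{k=p}^{m-1} q_{s k} ∏_{t=0}^{k-1} l_{s t} < ∏_{t=0}^{p-1} l_{s t}`. -/
theorem sum_tail_lt_prod
    {n : ℕ} (q : Fin (n + 1) → ℚ)
    (hq : StrictMono q) (h0 : 0 < q 0) (hlast : q (Fin.last n) = 1)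
    (s : ℕ → Fin n) (m p : ℕ) (hp : 1 ≤ p) (hpm : p ≤ m - 1) :
    ∑ k ∈ Finset.Ico p m,
        q (s k).castSucc * ∏ t ∈ Finset.range k, (q (s t).succ - q (s t).castSucc)
      < ∏ t ∈ Finset.range p, (q (s t).succ - q (s t).castSucc) := by
  set l : ℕ → ℚ := fun t => q (s t).succ - q (s t).castSucc with hl
  have hlpos : ∀ t, 0 < l t := fun t => sub_pos.mpr (hq Fin.castSucc_lt_succ)
  set P : ℕ → ℚ := fun k => ∏ t ∈ Finset.range k, l t with hP
  have hPpos : ∀ k, 0 < P k := fun k => Finset.prod_pos (fun t _ => hlpos t)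
  have hpm' : p ≤ m := by omega
  have hterm : ∀ k, q (s k).castSucc * P k ≤ P k - P (k + 1) := by
    intro k
    have hq1 : q (s k).succ ≤ 1 := hlast ▸ hq.monotone (Fin.le_last _)
    have hcast : q (s k).castSucc ≤ 1 - l k := by
      simp only [hl]; linarith
    have : q (s k).castSucc * P k ≤ (1 - l k) * P k :=
      mul_le_mul_of_nonneg_right hcast (hPpos k).le
    have hPk : P (k + 1) = l k * P k := by
      simp only [hP, Finset.prod_range_succ]; ring
    linarith
  calc ∑ k ∈ Finset.Ico p m, q (s k).castSucc * P k
      ≤ ∑ k ∈ Finset.Ico p m, (P k - P (k + 1)) :=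
        Finset.sum_le_sum fun k _ => hterm k
    _ = P p - P m := telescope_Ico P hpm'
    _ < P p := by linarith [hPpos m]
end

section
/- With q_i and l_i as above, define f on strings over {0,...,n−1} by f(s_{i_0}...s_{i_{m-1}}) = q_{i_0} + ∑_{k=1}^{m-1} q_{i_k} ∏_{t=0}^{k-1} l_{i_t} (with f(ε) = 0). Then f is strictly monotone with respect to lexicographic order: str₁ < str₂ implies f(str₁) < f(str₂). -/
/-- The order-preserving map `f : Σ* → ℚ` determined by rationals
`q 0 < q 1 < ⋯ < q n`:  `f(ε) = 0` and
`f(a · w) = q a + (q (a+1) - q a) * f(w)`, which agrees with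
`f(s_{i₀}⋯s_{i_{m-1}}) = q_{i₀} + ∑_{k=1}^{m-1} q_{i_k} ∏_{t=0}^{k-1} l_{i_t}`. -/
def opef {n : ℕ} (q : Fin (n + 1) → ℚ) : List (Fin n) → ℚ
  | [] => 0
  | a :: w => q a.castSucc + (q a.succ - q a.castSucc) * opef q w

lemma opef_bounds {n : ℕ} (q : Fin (n + 1) → ℚ)
    (hq : StrictMono q) (h0 : 0 < q 0) (hlast : q (Fin.last n) = 1) :
    ∀ w : List (Fin n), 0 ≤ opef q w ∧ opef q w < 1 := by
  intro w
  induction w with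
  | nil => simp [opef]
  | cons a w ih =>
    obtain ⟨h1, h2⟩ := ih
    have hl : 0 < q a.succ - q a.castSucc := by
      have := hq (a.castSucc_lt_succ)
      linarith
    have hq0 : 0 < q a.castSucc := lt_of_lt_of_le h0 (hq.monotone (Fin.zero_le _))
    have hle : q a.succ ≤ 1 := hlast ▸ hq.monotone (Fin.le_last _)
    constructor
    · simp only [opef]; positivity
    · simp only [opef]
      nlinarith

/-- `f` is strictly monotone with respect to lexicographic order on strings. -/
theorem opef_strictMono
    {n : ℕ} (q : Fin (n + 1) → ℚ)
    (hq : StrictMono q) (h0 : 0 < q 0) (hlast : q (Fin.last n) = 1) :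
    ∀ str₁ str₂ : List (Fin n),
      List.Lex (· < ·) str₁ str₂ → opef q str₁ < opef q str₂ := by
  intro str₁ str₂ h
  induction h with
  | nil =>
    rename_i a w
    have hq0 : 0 < q a.castSucc := lt_of_lt_of_le h0 (hq.monotone (Fin.zero_le _))
    have hl : 0 < q a.succ - q a.castSucc := by
      have := hq (a.castSucc_lt_succ); linarith
    have hb := opef_bounds q hq h0 hlast w
    simp only [opef]
    nlinarith [hb.1]
  | cons h ih =>
    rename_i a w₁ w₂
    have hl : 0 < q a.succ - q a.castSucc := by
      have := hq (a.castSucc_lt_succ); linarith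
    simp only [opef]
    nlinarith
  | rel hab =>
    rename_i a w₁ b w₂
    have hab' : q a.succ ≤ q b.castSucc := by
      apply hq.monotone
      have : (a : ℕ) + 1 ≤ (b : ℕ) := hab
      simpa [Fin.le_def] using this
    have hla : 0 < q a.succ - q a.castSucc := by
      have := hq (a.castSucc_lt_succ); linarith
    have hlb : 0 < q b.succ - q b.castSucc := by
      have := hq (b.castSucc_lt_succ); linarith
    have hb1 := opef_bounds q hq h0 hlast w₁
    have hb2 := opef_bounds q hq h0 hlast w₂
    simp only [opef]
    nlinarith [hb1.1, hb1.2, hb2.1]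
end

section
/- With f defined as above from rationals 0 < q_0 < ... < q_{n-1} < 1 (n ≥ 1), f is an injection from the set of strings over an n-symbol alphabet into ℚ ∩ [0, 1). -/
lemma opef_mem_Ico {n : ℕ} (q : Fin (n + 1) → ℚ) (hq : StrictMono q)
    (h0 : 0 < q 0) (hlast : q (Fin.last n) = 1) (a : Fin n) (w : List (Fin n)) :
    q a.castSucc ≤ opef q (a :: w) ∧ opef q (a :: w) < q a.succ := by
  have hgap : 0 < q a.succ - q a.castSucc := by
    have := hq (Fin.castSucc_lt_succ : a.castSucc < a.succ); linarith
  obtain ⟨h1, h2⟩ := opef_bounds q hq h0 hlast w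
  constructor
  · simp only [opef]; nlinarith
  · simp only [opef]; nlinarith

/-- `f` is an injection from strings over an `n`-symbol alphabet (`n ≥ 1`)
into `ℚ ∩ [0, 1)`: it is injective and takes values in `[0, 1)`. -/
theorem opef_injective
    {n : ℕ} (hn : 1 ≤ n) (q : Fin (n + 1) → ℚ)
    (hq : StrictMono q) (h0 : 0 < q 0) (hlast : q (Fin.last n) = 1) :
    Function.Injective (opef q) ∧
    ∀ str : List (Fin n), 0 ≤ opef q str ∧ opef q str < 1 := by
  refine ⟨?_, opef_bounds q hq h0 hlast⟩
  intro w1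
  induction w1 with
  | nil =>
    intro w2 h
    cases w2 with
    | nil => rfl
    | cons b w2 =>
      exfalso
      have h1 := (opef_mem_Ico q hq h0 hlast b w2).1
      have h2 : 0 < q b.castSucc := lt_of_lt_of_le h0 (hq.monotone (Fin.zero_le _))
      simp only [opef] at h h1
      linarith
  | cons a w1 ih =>
    intro w2 h
    cases w2 with
    | nil =>
      exfalso
      have h1 := (opef_mem_Ico q hq h0 hlast a w1).1
      have h2 : 0 < q a.castSucc := lt_of_lt_of_le h0 (hq.monotone (Fin.zero_le _))
      have : opef q ([] : List (Fin n)) = 0 := rfl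
      rw [this] at h
      linarith
    | cons b w2 =>
      -- first show a = b
      have hab : a = b := by
        by_contra hne
        rcases lt_or_gt_of_ne hne with hlt | hgt
        · have hle : a.succ ≤ b.castSucc := by
            have hv : a.val < b.val := hlt
            rw [Fin.le_def, Fin.val_succ, Fin.coe_castSucc]; omega
          have h1 := (opef_mem_Ico q hq h0 hlast a w1).2
          have h2 := (opef_mem_Ico q hq h0 hlast b w2).1
          have h3 := hq.monotone hle
          linarith
        · have hle : b.succ ≤ a.castSucc := by
            have hv : b.val < a.val := hgt
            rw [Fin.le_def, Fin.val_succ, Fin.coe_castSucc]; omega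
          have h1 := (opef_mem_Ico q hq h0 hlast b w2).2
          have h2 := (opef_mem_Ico q hq h0 hlast a w1).1
          have h3 := hq.monotone hle
          linarith
      subst hab
      have hgap : 0 < q a.succ - q a.castSucc := by
        have := hq (Fin.castSucc_lt_succ : a.castSucc < a.succ); linarith
      simp only [opef] at h
      have : opef q w1 = opef q w2 := by
        have := mul_left_cancel₀ (ne_of_gt hgap) (by linarith : (q a.succ - q a.castSucc) * opef q w1 = (q a.succ - q a.castSucc) * opef q w2)
        exact this
      rw [ih this]
end

section
/- For any two finite nonempty totally ordered alphabets Σ₁ and Σ₂ (each with at least two symbols), there exists an order-preserving bijection g: Σ₁* → Σ₂* with respect to lexicographic order on both sides (g need not be a monoid homomorphism). -/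
open List

namespace StringsOrderIso

variable {α : Type*} [LinearOrder α]

/-- strings not ending in `m`, including the empty string -/
abbrev Core (α : Type*) [LinearOrder α] (m : α) : Type _ :=
  {l : List α // l.getLast? ≠ some m}

/-- nonempty strings not ending in `m` -/
abbrev Core0 (α : Type*) [LinearOrder α] (m : α) : Type _ :=
  {l : List α // l ≠ [] ∧ l.getLast? ≠ some m}

theorem nil_lex {r : α → α → Prop} {w : List α} (hw : w ≠ []) : List.Lex r [] w := by
  cases w with
  | nil => exact absurd rfl hw
  | cons a l => exact List.Lex.nil

theorem lex_append_cons (r : α → α → Prop) :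
    ∀ (s : List α) (a : α) (l : List α), List.Lex r s (s ++ a :: l)
  | [], a, l => List.Lex.nil
  | b :: s, a, l => List.Lex.cons (lex_append_cons r s a l)

theorem ok_cons {m a : α} {v : List α} (h : (a :: v).getLast? ≠ some m) (hv : v ≠ []) :
    v.getLast? ≠ some m := by
  cases v with
  | nil => exact absurd rfl hv
  | cons b w => rwa [List.getLast?_cons_cons] at h

theorem ok_tail_ne {m a : α} {v : List α} (h : (a :: v).getLast? ≠ some m) (hv : v = []) :
    a ≠ m := by
  subst hv; simpa using h

/-- `m^j < v ++ m^k` whenever `v` is nonempty and doesn't end in `m`. -/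
theorem replicate_lex {m : α} (hm : ∀ a, m ≤ a) :
    ∀ (v : List α), v ≠ [] → v.getLast? ≠ some m → ∀ (j k : ℕ),
      List.Lex (· < ·) (replicate j m) (v ++ replicate k m) := by
  intro v
  induction v with
  | nil => intro h; exact absurd rfl h
  | cons a v ih =>
    intro _ hok j k
    cases j with
    | zero => exact List.Lex.nil
    | succ n =>
      rw [replicate_succ]
      rcases lt_or_eq_of_le (hm a) with hlt | heq
      · exact List.Lex.rel hlt
      · subst heq
        cases v with
        | nil => exact absurd rfl (ok_tail_ne hok rfl)
        | cons b w =>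
          exact List.Lex.cons (ih (by simp) (ok_cons hok (by simp)) n k)

/-- main monotonicity lemma across the decomposition -/
theorem lex_of_core_lex {m : α} (hm : ∀ a, m ≤ a) :
    ∀ {u v : List α}, List.Lex (· < ·) u v → u.getLast? ≠ some m →
      v.getLast? ≠ some m → ∀ (j k : ℕ),
      List.Lex (· < ·) (u ++ replicate j m) (v ++ replicate k m) := by
  intro u v h
  induction h with
  | nil => intro _ hv j k; exact replicate_lex hm _ (by simp) hv j k
  | @cons a l₁ l₂ h ih =>
    intro hu hv j k
    have hl₂ : l₂ ≠ [] := by rintro rfl; exact List.not_lex_nil h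
    have hok₂ : l₂.getLast? ≠ some m := ok_cons hv hl₂
    have hok₁ : l₁.getLast? ≠ some m := by
      rcases eq_or_ne l₁ [] with rfl | hne
      · simp
      · exact ok_cons hu hne
    simpa using List.Lex.cons (a := a) (ih hok₁ hok₂ j k)
  | @rel a l₁ b l₂ h => intro _ _ j k; exact List.Lex.rel h

/-- `m^j ++ [t] < v` when `v` nonempty, not ending in `m`, `j = v.length` -/
theorem below_lex {m t : α} (hm : ∀ a, m ≤ a) :
    ∀ (v : List α), v ≠ [] → v.getLast? ≠ some m →
      List.Lex (· < ·) (replicate v.length m ++ [t]) v := by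
  intro v
  induction v with
  | nil => intro h; exact absurd rfl h
  | cons a v ih =>
    intro _ hok
    rw [length_cons, replicate_succ, cons_append]
    rcases lt_or_eq_of_le (hm a) with hlt | heq
    · exact List.Lex.rel hlt
    · subst heq
      cases v with
      | nil => exact absurd rfl (ok_tail_ne hok rfl)
      | cons b w =>
        exact List.Lex.cons (ih (by simp) (ok_cons hok (by simp)))

/-- density witness -/
theorem dense_lex {m t : α} (hm : ∀ a, m ≤ a) (ht : m < t) :
    ∀ {u v : List α}, List.Lex (· < ·) u v → v.getLast? ≠ some m →
      ∃ w : List α, List.Lex (· < ·) u w ∧ List.Lex (· < ·) w v ∧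
        w ≠ [] ∧ w.getLast? ≠ some m := by
  intro u v h
  induction h with
  | @nil a l =>
    intro hv
    refine ⟨replicate (a :: l).length m ++ [t], nil_lex (by simp), below_lex hm _ (by simp) hv,
      by simp, ?_⟩
    rw [List.getLast?_concat]
    simpa using (ne_of_gt ht)
  | @cons a l₁ l₂ h ih =>
    intro hv
    have hl₂ : l₂ ≠ [] := by rintro rfl; exact List.not_lex_nil h
    obtain ⟨w, h1, h2, h3, h4⟩ := ih (ok_cons hv hl₂)
    exact ⟨a :: w, List.Lex.cons h1, List.Lex.cons h2, by simp, by
      cases w with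
      | nil => exact absurd rfl h3
      | cons b w' => rwa [List.getLast?_cons_cons]⟩
  | @rel a l₁ b l₂ h =>
    intro _
    refine ⟨(a :: l₁) ++ [t], lex_append_cons _ _ _ _, ?_, by simp, ?_⟩
    · rw [cons_append]; exact List.Lex.rel h
    · rw [List.getLast?_concat]; simpa using (ne_of_gt ht)

/-- every string decomposes as core ++ m^k -/
theorem exists_decomp (m : α) (l : List α) :
    ∃ (u : List α) (k : ℕ), u.getLast? ≠ some m ∧ l = u ++ replicate k m := by
  induction l using List.reverseRecOn with
  | nil => exact ⟨[], 0, by simp, by simp⟩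
  | append_singleton l a ih =>
    rcases eq_or_ne a m with rfl | hne
    · obtain ⟨u, k, h1, h2⟩ := ih
      exact ⟨u, k + 1, h1, by rw [h2, List.replicate_succ' (n := k) (a := a), ← List.append_assoc]⟩
    · exact ⟨l ++ [a], 0, by rw [List.getLast?_concat]; simpa using hne, by simp⟩

/-- the stripping order isomorphism -/
noncomputable def coreIso {m : α} (hm : ∀ a, m ≤ a) :
    (Core α m ×ₗ ℕ) ≃o List α := by
  refine StrictMono.orderIsoOfSurjective
    (fun p => (ofLex p).1.val ++ replicate (ofLex p).2 m) ?_ ?_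
  · intro p q h
    obtain h | ⟨h1, h2⟩ := (Prod.Lex.lt_iff (x := p) (y := q)).mp h
    · exact lex_of_core_lex hm (Subtype.coe_lt_coe.mpr h) (ofLex p).1.prop (ofLex q).1.prop _ _
    · show (ofLex p).1.val ++ replicate (ofLex p).2 m <
        (ofLex q).1.val ++ replicate (ofLex q).2 m
      rw [h1]
      have : (ofLex q).2 = (ofLex p).2 + ((ofLex q).2 - (ofLex p).2) := by omega
      rw [this, List.replicate_add, ← List.append_assoc]
      have hpos : (ofLex q).2 - (ofLex p).2 ≠ 0 := by omega
      obtain ⟨n, hn⟩ := Nat.exists_eq_succ_of_ne_zero hpos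
      rw [hn, replicate_succ]
      exact lex_append_cons _ _ _ _
  · intro l
    obtain ⟨u, k, h1, h2⟩ := exists_decomp m l
    exact ⟨toLex (⟨u, h1⟩, k), h2.symm⟩

end StringsOrderIso

open StringsOrderIso List

/-- For any two finite totally ordered alphabets, each with at least two
symbols, there exists an order-preserving bijection between their sets of
strings with respect to lexicographic order. -/
theorem exists_orderPreserving_bijection_strings
    {α β : Type*} [Fintype α] [LinearOrder α] [Fintype β] [LinearOrder β]
    (hα : ∃ a b : α, a < b) (hβ : ∃ a b : β, a < b) :
    ∃ g : List α → List β, Function.Bijective g ∧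
      ∀ u v : List α, List.Lex (· < ·) u v → List.Lex (· < ·) (g u) (g v) := by
  obtain ⟨a, t, hat⟩ := hα
  obtain ⟨a', t', hat'⟩ := hβ
  haveI : Nonempty α := ⟨a⟩
  haveI : Nonempty β := ⟨a'⟩
  set m : α := Finset.univ.min' Finset.univ_nonempty with hm_def
  set m' : β := Finset.univ.min' Finset.univ_nonempty with hm'_def
  have hm : ∀ x : α, m ≤ x := fun x => Finset.min'_le _ _ (Finset.mem_univ x)
  have hm' : ∀ x : β, m' ≤ x := fun x => Finset.min'_le _ _ (Finset.mem_univ x)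
  have ht : m < t := lt_of_le_of_lt (hm a) hat
  have ht' : m' < t' := lt_of_le_of_lt (hm' a') hat'
  -- instances for Core0
  haveI : Nonempty (Core0 α m) := ⟨⟨[t], by simp, by simpa using (ne_of_gt ht)⟩⟩
  haveI : Nonempty (Core0 β m') := ⟨⟨[t'], by simp, by simpa using (ne_of_gt ht')⟩⟩
  haveI : NoMaxOrder (Core0 α m) := by
    constructor
    intro x
    refine ⟨⟨x.val ++ [t], by simp, by rw [List.getLast?_concat]; simpa using (ne_of_gt ht)⟩, ?_⟩
    exact Subtype.coe_lt_coe.mp (lex_append_cons _ _ _ _)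
  haveI : NoMaxOrder (Core0 β m') := by
    constructor
    intro x
    refine ⟨⟨x.val ++ [t'], by simp, by rw [List.getLast?_concat]; simpa using (ne_of_gt ht')⟩, ?_⟩
    exact Subtype.coe_lt_coe.mp (lex_append_cons _ _ _ _)
  haveI : NoMinOrder (Core0 α m) := by
    constructor
    intro x
    refine ⟨⟨replicate x.val.length m ++ [t], by simp,
      by rw [List.getLast?_concat]; simpa using (ne_of_gt ht)⟩, ?_⟩
    exact Subtype.coe_lt_coe.mp (below_lex hm _ x.prop.1 x.prop.2)
  haveI : NoMinOrder (Core0 β m') := by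
    constructor
    intro x
    refine ⟨⟨replicate x.val.length m' ++ [t'], by simp,
      by rw [List.getLast?_concat]; simpa using (ne_of_gt ht')⟩, ?_⟩
    exact Subtype.coe_lt_coe.mp (below_lex hm' _ x.prop.1 x.prop.2)
  haveI : DenselyOrdered (Core0 α m) := by
    constructor
    intro x y hxy
    obtain ⟨w, h1, h2, h3, h4⟩ := dense_lex hm ht (Subtype.coe_lt_coe.mpr hxy) y.prop.2
    exact ⟨⟨w, h3, h4⟩, Subtype.coe_lt_coe.mp h1, Subtype.coe_lt_coe.mp h2⟩
  haveI : DenselyOrdered (Core0 β m') := by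
    constructor
    intro x y hxy
    obtain ⟨w, h1, h2, h3, h4⟩ := dense_lex hm' ht' (Subtype.coe_lt_coe.mpr hxy) y.prop.2
    exact ⟨⟨w, h3, h4⟩, Subtype.coe_lt_coe.mp h1, Subtype.coe_lt_coe.mp h2⟩
  obtain ⟨e⟩ : Nonempty (Core0 α m ≃o Core0 β m') := Order.iso_of_countable_dense _ _
  -- extend e to Core (with the empty string as bottom)
  let eC : Core α m → Core β m' := fun x =>
    if h : x.val = [] then ⟨[], by simp⟩
    else ⟨(e ⟨x.val, h, x.prop⟩).val, (e ⟨x.val, h, x.prop⟩).prop.2⟩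
  have eC_mono : StrictMono eC := by
    intro x y hxy
    have hlex : List.Lex (· < ·) x.val y.val := Subtype.coe_lt_coe.mpr hxy
    have hy : y.val ≠ [] := by
      rintro hy
      rw [hy] at hlex
      exact List.not_lex_nil hlex
    rcases eq_or_ne x.val [] with hx | hx
    · apply Subtype.coe_lt_coe.mp
      simp only [eC, dif_pos hx, dif_neg hy]
      exact nil_lex (e ⟨y.val, hy, y.prop⟩).prop.1
    · apply Subtype.coe_lt_coe.mp
      simp only [eC, dif_neg hx, dif_neg hy]
      have : (⟨x.val, hx, x.prop⟩ : Core0 α m) < ⟨y.val, hy, y.prop⟩ :=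
        Subtype.coe_lt_coe.mp hlex
      exact Subtype.coe_lt_coe.mpr (e.strictMono this)
  have eC_surj : Function.Surjective eC := by
    intro z
    rcases eq_or_ne z.val [] with hz | hz
    · refine ⟨⟨[], by simp⟩, ?_⟩
      apply Subtype.ext
      simp only [eC, dif_pos]
      exact hz.symm
    · refine ⟨⟨(e.symm ⟨z.val, hz, z.prop⟩).val, (e.symm ⟨z.val, hz, z.prop⟩).prop.2⟩, ?_⟩
      apply Subtype.ext
      have hne : (e.symm ⟨z.val, hz, z.prop⟩).val ≠ [] := (e.symm ⟨z.val, hz, z.prop⟩).prop.1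
      simp only [eC, dif_neg hne]
      have : (⟨(e.symm ⟨z.val, hz, z.prop⟩).val, hne, (e.symm ⟨z.val, hz, z.prop⟩).prop.2⟩ :
          Core0 α m) = e.symm ⟨z.val, hz, z.prop⟩ := Subtype.ext rfl
      rw [this, OrderIso.apply_symm_apply]
  let eCIso : Core α m ≃o Core β m' := StrictMono.orderIsoOfSurjective eC eC_mono eC_surj
  -- product iso
  let pMap : (Core α m ×ₗ ℕ) → (Core β m' ×ₗ ℕ) :=
    fun p => toLex (eCIso (ofLex p).1, (ofLex p).2)
  have pMono : StrictMono pMap := by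
    intro p q h
    obtain h | ⟨h1, h2⟩ := (Prod.Lex.lt_iff (x := p) (y := q)).mp h
    · exact Prod.Lex.lt_iff.mpr (Or.inl (eCIso.strictMono h))
    · exact Prod.Lex.lt_iff.mpr (Or.inr ⟨by show eCIso (ofLex p).1 = eCIso (ofLex q).1; rw [h1], h2⟩)
  have pSurj : Function.Surjective pMap := by
    intro q
    refine ⟨toLex (eCIso.symm (ofLex q).1, (ofLex q).2), ?_⟩
    show toLex (eCIso (eCIso.symm (ofLex q).1), (ofLex q).2) = q
    rw [OrderIso.apply_symm_apply]
    rfl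
  let pIso : (Core α m ×ₗ ℕ) ≃o (Core β m' ×ₗ ℕ) :=
    StrictMono.orderIsoOfSurjective pMap pMono pSurj
  let G : List α ≃o List β := ((coreIso hm).symm.trans pIso).trans (coreIso hm')
  refine ⟨G, G.toEquiv.bijective, fun u v huv => ?_⟩
  exact G.strictMono huv
end

section
/- With f as defined above and q_0 > 0, if str₁ < str₂ due to differing first at position p with index i_p < j_p, then f(str₂) − f(str₁) > 0; in particular f(str₂) − f(str₁) > (q_{j_p} − q_{i_p} − l_{i_p}) · ∏_{t=0}^{p-1} l_{i_t} ≥ 0. -/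
section Aux
variable {n : ℕ} (q : Fin (n + 1) → ℚ)

private lemma opef_peel (L : ℕ) (g : ℕ → Fin n) :
    (∑ k ∈ Finset.range (L + 1),
        q (g k).castSucc * ∏ t ∈ Finset.range k, (q (g t).succ - q (g t).castSucc))
    = (∑ k ∈ Finset.range L, q (g (k + 1)).castSucc *
          ∏ t ∈ Finset.range k, (q (g (t + 1)).succ - q (g (t + 1)).castSucc))
        * (q (g 0).succ - q (g 0).castSucc) + q (g 0).castSucc := by
  rw [Finset.sum_range_succ', Finset.sum_mul]
  simp [Finset.prod_range_succ', mul_assoc]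

private lemma opef_lt_one (hq : StrictMono q) (hlast : q (Fin.last n) = 1) :
    ∀ (L : ℕ) (g : ℕ → Fin n),
      (∑ k ∈ Finset.range L,
        q (g k).castSucc * ∏ t ∈ Finset.range k, (q (g t).succ - q (g t).castSucc)) < 1 := by
  intro L
  induction L with
  | zero => intro g; simp
  | succ L ih =>
    intro g
    have hl : 0 < q (g 0).succ - q (g 0).castSucc :=
      sub_pos.mpr (hq Fin.castSucc_lt_succ)
    have hle : q (g 0).succ ≤ 1 := by
      rw [← hlast]; exact hq.monotone (Fin.le_last _)
    rw [opef_peel]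
    have hS := ih (fun k => g (k + 1))
    nlinarith [mul_pos hl (sub_pos.mpr hS)]

private lemma opef_ge (hq : StrictMono q) (h0 : 0 < q 0) (L : ℕ) (g : ℕ → Fin n) (hL : 0 < L) :
    q (g 0).castSucc ≤ ∑ k ∈ Finset.range L,
        q (g k).castSucc * ∏ t ∈ Finset.range k, (q (g t).succ - q (g t).castSucc) := by
  have h := Finset.single_le_sum (f := fun k => q (g k).castSucc *
      ∏ t ∈ Finset.range k, (q (g t).succ - q (g t).castSucc)) (fun k _ => ?_)
      (Finset.mem_range.mpr hL)
  · simpa using h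
  · have h1 : 0 ≤ q (g k).castSucc := le_of_lt (lt_of_lt_of_le h0 (hq.monotone (Fin.zero_le _)))
    have h2 : 0 ≤ ∏ t ∈ Finset.range k, (q (g t).succ - q (g t).castSucc) :=
      Finset.prod_nonneg fun t _ => le_of_lt (sub_pos.mpr (hq Fin.castSucc_lt_succ))
    exact mul_nonneg h1 h2

private lemma opef_split (p : ℕ) (g : ℕ → Fin n) :
    ∀ (M : ℕ), p ≤ M →
    (∑ k ∈ Finset.range M,
        q (g k).castSucc * ∏ t ∈ Finset.range k, (q (g t).succ - q (g t).castSucc))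
    = (∑ k ∈ Finset.range p,
        q (g k).castSucc * ∏ t ∈ Finset.range k, (q (g t).succ - q (g t).castSucc))
      + (∑ k ∈ Finset.range (M - p), q (g (p + k)).castSucc *
            ∏ t ∈ Finset.range k, (q (g (p + t)).succ - q (g (p + t)).castSucc))
          * ∏ t ∈ Finset.range p, (q (g t).succ - q (g t).castSucc) := by
  intro M hM
  obtain ⟨a, rfl⟩ : ∃ a, M = p + a := ⟨M - p, by omega⟩
  rw [Nat.add_sub_cancel_left, Finset.sum_range_add, Finset.sum_mul]
  congr 1
  refine Finset.sum_congr rfl fun k _ => ?_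
  rw [Finset.prod_range_add]
  ring

end Aux

/-- Case 2 of the monotonicity proof: if `str₁` (indices `i`, length `m`) and
`str₂` (indices `j`, length `n'`) agree at positions `0..p-1` and `i p < j p`,
then `f(str₂) - f(str₁) > (q_{j p} - q_{i p} - l_{i p}) · ∏_{t<p} l_{i t} ≥ 0`;
in particular `f(str₂) - f(str₁) > 0`.  Here
`f = ∑_{k<len} q_{idx k} ∏_{t<k} l_{idx t}` and `l a = q (a+1) - q a`. -/
theorem opef_sub_pos_of_first_diff
    {n : ℕ} (q : Fin (n + 1) → ℚ)
    (hq : StrictMono q) (h0 : 0 < q 0) (hlast : q (Fin.last n) = 1)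
    (i j : ℕ → Fin n) (m n' p : ℕ)
    (hpm : p < m) (hpn : p < n')
    (hagree : ∀ t, t < p → i t = j t) (hdiff : i p < j p) :
    (∑ k ∈ Finset.range n',
        q (j k).castSucc * ∏ t ∈ Finset.range k, (q (j t).succ - q (j t).castSucc))
      - (∑ k ∈ Finset.range m,
        q (i k).castSucc * ∏ t ∈ Finset.range k, (q (i t).succ - q (i t).castSucc))
      > (q (j p).castSucc - q (i p).castSucc - (q (i p).succ - q (i p).castSucc))
          * ∏ t ∈ Finset.range p, (q (i t).succ - q (i t).castSucc)
    ∧ 0 ≤ (q (j p).castSucc - q (i p).castSucc - (q (i p).succ - q (i p).castSucc))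
          * ∏ t ∈ Finset.range p, (q (i t).succ - q (i t).castSucc)
    ∧ 0 < (∑ k ∈ Finset.range n',
        q (j k).castSucc * ∏ t ∈ Finset.range k, (q (j t).succ - q (j t).castSucc))
      - (∑ k ∈ Finset.range m,
        q (i k).castSucc * ∏ t ∈ Finset.range k, (q (i t).succ - q (i t).castSucc)) := by
  -- positivity of each length l
  have hlpos : ∀ a : Fin n, 0 < q a.succ - q a.castSucc :=
    fun a => sub_pos.mpr (hq Fin.castSucc_lt_succ)
  set P := ∏ t ∈ Finset.range p, (q (i t).succ - q (i t).castSucc) with hPdef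
  have hP : 0 < P := Finset.prod_pos fun t _ => hlpos _
  -- the two sums split at p
  have hi := opef_split q p i m hpm.le
  have hj := opef_split q p j n' hpn.le
  -- prefixes agree
  have hpre : (∑ k ∈ Finset.range p,
      q (j k).castSucc * ∏ t ∈ Finset.range k, (q (j t).succ - q (j t).castSucc))
      = ∑ k ∈ Finset.range p,
      q (i k).castSucc * ∏ t ∈ Finset.range k, (q (i t).succ - q (i t).castSucc) := by
    refine Finset.sum_congr rfl fun k hk => ?_
    rw [Finset.mem_range] at hk
    rw [hagree k hk]
    congr 1
    exact Finset.prod_congr rfl fun t ht => by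
      rw [hagree t (lt_trans (Finset.mem_range.mp ht) hk)]
  have hPj : (∏ t ∈ Finset.range p, (q (j t).succ - q (j t).castSucc)) = P := by
    rw [hPdef]
    exact Finset.prod_congr rfl fun t ht => by rw [hagree t (Finset.mem_range.mp ht)]
  set Ti := ∑ k ∈ Finset.range (m - p), q (i (p + k)).castSucc *
      ∏ t ∈ Finset.range k, (q (i (p + t)).succ - q (i (p + t)).castSucc) with hTi
  set Tj := ∑ k ∈ Finset.range (n' - p), q (j (p + k)).castSucc *
      ∏ t ∈ Finset.range k, (q (j (p + t)).succ - q (j (p + t)).castSucc) with hTj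
  -- Tj ≥ q (j p)
  have hTjge : q (j p).castSucc ≤ Tj := by
    have := opef_ge q hq h0 (n' - p) (fun k => j (p + k)) (by omega)
    simpa using this
  -- Ti < q (i p).succ
  have hTilt : Ti < q (i p).succ := by
    obtain ⟨L, hL⟩ : ∃ L, m - p = L + 1 := ⟨m - p - 1, by omega⟩
    have hpeel := opef_peel q L (fun k => i (p + k))
    rw [hTi, hL, hpeel]
    have hS := opef_lt_one q hq hlast L (fun k => i (p + (k + 1)))
    have hl0 : 0 < q (i (p + 0)).succ - q (i (p + 0)).castSucc := hlpos _
    simp only [Nat.add_zero] at hl0 ⊢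
    nlinarith [mul_pos hl0 (sub_pos.mpr hS)]
  -- D ≥ 0
  have hjp : q (i p).succ ≤ q (j p).castSucc := by
    apply hq.monotone
    have hv : (i p).val < (j p).val := hdiff
    rw [Fin.le_def]
    simp only [Fin.val_succ, Fin.coe_castSucc]
    omega
  have hD : 0 ≤ q (j p).castSucc - q (i p).castSucc - (q (i p).succ - q (i p).castSucc) := by
    linarith
  have hdiffsum : (∑ k ∈ Finset.range n',
      q (j k).castSucc * ∏ t ∈ Finset.range k, (q (j t).succ - q (j t).castSucc))
      - (∑ k ∈ Finset.range m,
      q (i k).castSucc * ∏ t ∈ Finset.range k, (q (i t).succ - q (i t).castSucc))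
      = (Tj - Ti) * P := by
    rw [hi, hj, hpre, hPj]
    ring
  have hkey : (Tj - Ti) * P >
      (q (j p).castSucc - q (i p).castSucc - (q (i p).succ - q (i p).castSucc)) * P := by
    apply mul_lt_mul_of_pos_right _ hP
    linarith
  refine ⟨by rw [hdiffsum]; exact hkey, mul_nonneg hD hP.le, ?_⟩
  rw [hdiffsum]
  nlinarith [mul_nonneg hD hP.le]
end
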